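/- Every sequence of commutative (permutative) reductions in full system F terminates. -/

import Mathlib

/-! Types of full system F: type variables (de Bruijn), ⊥, →, ∧, ∨, ∀, ∃. -/
inductive FTy : Type
  | tvar : ℕ → FTy
  | bot  : FTy
  | arr  : FTy → FTy → FTy
  | and  : FTy → FTy → FTy
  | or   : FTy → FTy → FTy
  | all  : FTy → FTy
  | ex   : FTy → FTy
  deriving DecidableEq

namespace FTy

/-- Shift the free type variables `≥ c` by `d`. -/
def shift (c d : ℕ) : FTy → FTy
  | tvar n => if n < c then tvar n else tvar (n + d)
  | bot => bot
  | arr a b => arr (shift c d a) (shift c d b)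
  | and a b => and (shift c d a) (shift c d b)
  | or a b => or (shift c d a) (shift c d b)
  | all t => all (shift (c + 1) d t)
  | ex t => ex (shift (c + 1) d t)

/-- Substitution of a type for type variable `n`. -/
def subst : FTy → ℕ → FTy → FTy
  | tvar m, n, s => if m = n then s else if n < m then tvar (m - 1) else tvar m
  | bot, _, _ => bot
  | arr a b, n, s => arr (subst a n s) (subst b n s)
  | and a b, n, s => and (subst a n s) (subst b n s)
  | or a b, n, s => or (subst a n s) (subst b n s)
  | all t, n, s => all (subst t (n + 1) (shift 0 1 s))
  | ex t, n, s => ex (subst t (n + 1) (shift 0 1 s))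

end FTy

/-- The helper CPS type translation `τ*` (with `τ̄ = (τ*→⊥)→⊥` inlined). -/
def star : FTy → FTy
  | .tvar n => .tvar n
  | .bot => .bot
  | .arr a b =>
      .arr (.arr (.arr (star a) .bot) .bot) (.arr (.arr (star b) .bot) .bot)
  | .and a b =>
      .arr (.arr (.arr (.arr (star a) .bot) .bot)
        (.arr (.arr (.arr (star b) .bot) .bot) .bot)) .bot
  | .or a b =>
      .arr (.arr (.arr (.arr (star a) .bot) .bot) .bot)
        (.arr (.arr (.arr (.arr (star b) .bot) .bot) .bot) .bot)
  | .all t => .all (.arr (.arr (star t) .bot) .bot)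
  | .ex t => .arr (.all (.arr (.arr (.arr (star t) .bot) .bot) .bot)) .bot

/-- The CPS type translation `τ̄ = (τ*→⊥)→⊥`. -/
def bar (t : FTy) : FTy := .arr (.arr (star t) .bot) .bot

/-- Church-style terms of full system F (de Bruijn for both term and type variables). -/
inductive FTm : Type
  | var     : ℕ → FTm
  | lam     : FTy → FTm → FTm
  | app     : FTm → FTm → FTm
  | pair    : FTm → FTm → FTm
  | inl     : FTy → FTy → FTm → FTm
  | inr     : FTy → FTy → FTm → FTm
  | proj1   : FTm → FTm
  | proj2   : FTm → FTm
  | case    : FTm → FTm → FTm → FTy → FTm   -- W[x.S, y.T]^δ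
  | eps     : FTm → FTy → FTm               -- A^⊥ ε_σ
  | tlam    : FTm → FTm                     -- Λp. M
  | tapp    : FTm → FTy → FTm               -- M σ
  | exintro : FTm → FTy → FTm               -- [M, σ]
  | exelim  : FTm → FTm → FTy → FTm         -- M [x.P]^δ  (binds a type and a term var in P)
  deriving DecidableEq

namespace FTm

/-- Shift free *term* variables `≥ c` by `d`. -/
def shiftTm (c d : ℕ) : FTm → FTm
  | var n => if n < c then var n else var (n + d)
  | lam σ t => lam σ (shiftTm (c + 1) d t)
  | app s t => app (shiftTm c d s) (shiftTm c d t)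
  | pair s t => pair (shiftTm c d s) (shiftTm c d t)
  | inl σ τ t => inl σ τ (shiftTm c d t)
  | inr σ τ t => inr σ τ (shiftTm c d t)
  | proj1 t => proj1 (shiftTm c d t)
  | proj2 t => proj2 (shiftTm c d t)
  | case w s t δ => case (shiftTm c d w) (shiftTm (c + 1) d s) (shiftTm (c + 1) d t) δ
  | eps t σ => eps (shiftTm c d t) σ
  | tlam t => tlam (shiftTm c d t)
  | tapp t σ => tapp (shiftTm c d t) σ
  | exintro t σ => exintro (shiftTm c d t) σ
  | exelim m p δ => exelim (shiftTm c d m) (shiftTm (c + 1) d p) δ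

/-- Shift free *type* variables `≥ c` by `d` in a term. -/
def shiftTy (c d : ℕ) : FTm → FTm
  | var n => var n
  | lam σ t => lam (σ.shift c d) (shiftTy c d t)
  | app s t => app (shiftTy c d s) (shiftTy c d t)
  | pair s t => pair (shiftTy c d s) (shiftTy c d t)
  | inl σ τ t => inl (σ.shift c d) (τ.shift c d) (shiftTy c d t)
  | inr σ τ t => inr (σ.shift c d) (τ.shift c d) (shiftTy c d t)
  | proj1 t => proj1 (shiftTy c d t)
  | proj2 t => proj2 (shiftTy c d t)
  | case w s t δ => case (shiftTy c d w) (shiftTy c d s) (shiftTy c d t) (δ.shift c d)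
  | eps t σ => eps (shiftTy c d t) (σ.shift c d)
  | tlam t => tlam (shiftTy (c + 1) d t)
  | tapp t σ => tapp (shiftTy c d t) (σ.shift c d)
  | exintro t σ => exintro (shiftTy c d t) (σ.shift c d)
  | exelim m p δ => exelim (shiftTy c d m) (shiftTy (c + 1) d p) (δ.shift c d)

/-- Substitute term `s` for term variable `n`. -/
def substTm : FTm → ℕ → FTm → FTm
  | var m, n, s => if m = n then s else if n < m then var (m - 1) else var m
  | lam σ t, n, s => lam σ (substTm t (n + 1) (shiftTm 0 1 s))
  | app a b, n, s => app (substTm a n s) (substTm b n s)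
  | pair a b, n, s => pair (substTm a n s) (substTm b n s)
  | inl σ τ t, n, s => inl σ τ (substTm t n s)
  | inr σ τ t, n, s => inr σ τ (substTm t n s)
  | proj1 t, n, s => proj1 (substTm t n s)
  | proj2 t, n, s => proj2 (substTm t n s)
  | case w a b δ, n, s =>
      case (substTm w n s) (substTm a (n + 1) (shiftTm 0 1 s)) (substTm b (n + 1) (shiftTm 0 1 s)) δ
  | eps t σ, n, s => eps (substTm t n s) σ
  | tlam t, n, s => tlam (substTm t n (shiftTy 0 1 s))
  | tapp t σ, n, s => tapp (substTm t n s) σ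
  | exintro t σ, n, s => exintro (substTm t n s) σ
  | exelim m p δ, n, s =>
      exelim (substTm m n s) (substTm p (n + 1) (shiftTy 0 1 (shiftTm 0 1 s))) δ

/-- Substitute type `ρ` for type variable `n` in a term. -/
def substTy : FTm → ℕ → FTy → FTm
  | var m, _, _ => var m
  | lam σ t, n, ρ => lam (σ.subst n ρ) (substTy t n ρ)
  | app a b, n, ρ => app (substTy a n ρ) (substTy b n ρ)
  | pair a b, n, ρ => pair (substTy a n ρ) (substTy b n ρ)
  | inl σ τ t, n, ρ => inl (σ.subst n ρ) (τ.subst n ρ) (substTy t n ρ)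
  | inr σ τ t, n, ρ => inr (σ.subst n ρ) (τ.subst n ρ) (substTy t n ρ)
  | proj1 t, n, ρ => proj1 (substTy t n ρ)
  | proj2 t, n, ρ => proj2 (substTy t n ρ)
  | case w a b δ, n, ρ => case (substTy w n ρ) (substTy a n ρ) (substTy b n ρ) (δ.subst n ρ)
  | eps t σ, n, ρ => eps (substTy t n ρ) (σ.subst n ρ)
  | tlam t, n, ρ => tlam (substTy t (n + 1) (ρ.shift 0 1))
  | tapp t σ, n, ρ => tapp (substTy t n ρ) (σ.subst n ρ)
  | exintro t σ, n, ρ => exintro (substTy t n ρ) (σ.subst n ρ)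
  | exelim m p δ, n, ρ =>
      exelim (substTy m n ρ) (substTy p (n + 1) (ρ.shift 0 1)) (δ.subst n ρ)

/-- Size of a term (invariant under shifting). -/
def size : FTm → ℕ
  | var _ => 1
  | lam _ t => size t + 1
  | app s t => size s + size t + 1
  | pair s t => size s + size t + 1
  | inl _ _ t => size t + 1
  | inr _ _ t => size t + 1
  | proj1 t => size t + 1
  | proj2 t => size t + 1
  | case w s t _ => size w + size s + size t + 1
  | eps t _ => size t + 1
  | tlam t => size t + 1
  | tapp t _ => size t + 1
  | exintro t _ => size t + 1
  | exelim m p _ => size m + size p + 1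

@[simp] theorem size_shiftTm (c d : ℕ) (t : FTm) : (shiftTm c d t).size = t.size := by
  induction t generalizing c with
  | var n => simp only [shiftTm]; split <;> rfl
  | _ => simp_all [shiftTm, size]

end FTm

/-- Typing judgment of full system F. -/
inductive HasTyF : List FTy → FTm → FTy → Prop
  | var {Γ n τ} : Γ[n]? = some τ → HasTyF Γ (.var n) τ
  | lam {Γ σ τ t} : HasTyF (σ :: Γ) t τ → HasTyF Γ (.lam σ t) (.arr σ τ)
  | app {Γ σ τ s t} : HasTyF Γ s (.arr σ τ) → HasTyF Γ t σ → HasTyF Γ (.app s t) τ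
  | pair {Γ σ τ s t} : HasTyF Γ s σ → HasTyF Γ t τ → HasTyF Γ (.pair s t) (.and σ τ)
  | inl {Γ σ τ t} : HasTyF Γ t σ → HasTyF Γ (.inl σ τ t) (.or σ τ)
  | inr {Γ σ τ t} : HasTyF Γ t τ → HasTyF Γ (.inr σ τ t) (.or σ τ)
  | proj1 {Γ σ τ t} : HasTyF Γ t (.and σ τ) → HasTyF Γ (.proj1 t) σ
  | proj2 {Γ σ τ t} : HasTyF Γ t (.and σ τ) → HasTyF Γ (.proj2 t) τ
  | case {Γ σ τ δ w s t} : HasTyF Γ w (.or σ τ) → HasTyF (σ :: Γ) s δ → HasTyF (τ :: Γ) t δ →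
      HasTyF Γ (.case w s t δ) δ
  | eps {Γ σ t} : HasTyF Γ t .bot → HasTyF Γ (.eps t σ) σ
  | tlam {Γ τ t} : HasTyF (Γ.map (FTy.shift 0 1)) t τ → HasTyF Γ (.tlam t) (.all τ)
  | tapp {Γ τ σ t} : HasTyF Γ t (.all τ) → HasTyF Γ (.tapp t σ) (τ.subst 0 σ)
  | exintro {Γ ρ σ t} : HasTyF Γ t (ρ.subst 0 σ) → HasTyF Γ (.exintro t σ) (.ex ρ)
  | exelim {Γ ρ δ m p} : HasTyF Γ m (.ex ρ) →
      HasTyF (ρ :: Γ.map (FTy.shift 0 1)) p (δ.shift 0 1) → HasTyF Γ (.exelim m p δ) δ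

/-- Compatible (congruence) closure of a root relation on terms of full system F. -/
inductive CompatF (R : FTm → FTm → Prop) : FTm → FTm → Prop
  | root {a b} : R a b → CompatF R a b
  | lam {σ a b} : CompatF R a b → CompatF R (.lam σ a) (.lam σ b)
  | appL {a b t} : CompatF R a b → CompatF R (.app a t) (.app b t)
  | appR {a b t} : CompatF R a b → CompatF R (.app t a) (.app t b)
  | pairL {a b t} : CompatF R a b → CompatF R (.pair a t) (.pair b t)
  | pairR {a b t} : CompatF R a b → CompatF R (.pair t a) (.pair t b)
  | inl {σ τ a b} : CompatF R a b → CompatF R (.inl σ τ a) (.inl σ τ b)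
  | inr {σ τ a b} : CompatF R a b → CompatF R (.inr σ τ a) (.inr σ τ b)
  | proj1 {a b} : CompatF R a b → CompatF R (.proj1 a) (.proj1 b)
  | proj2 {a b} : CompatF R a b → CompatF R (.proj2 a) (.proj2 b)
  | caseW {δ a b s t} : CompatF R a b → CompatF R (.case a s t δ) (.case b s t δ)
  | caseS {δ w a b t} : CompatF R a b → CompatF R (.case w a t δ) (.case w b t δ)
  | caseT {δ w s a b} : CompatF R a b → CompatF R (.case w s a δ) (.case w s b δ)
  | eps {σ a b} : CompatF R a b → CompatF R (.eps a σ) (.eps b σ)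
  | tlam {a b} : CompatF R a b → CompatF R (.tlam a) (.tlam b)
  | tapp {σ a b} : CompatF R a b → CompatF R (.tapp a σ) (.tapp b σ)
  | exintro {σ a b} : CompatF R a b → CompatF R (.exintro a σ) (.exintro b σ)
  | exelimM {δ a b p} : CompatF R a b → CompatF R (.exelim a p δ) (.exelim b p δ)
  | exelimP {δ m a b} : CompatF R a b → CompatF R (.exelim m a δ) (.exelim m b δ)

/-- Root β-reductions of full system F. -/
inductive FBetaRoot : FTm → FTm → Prop
  | beta {σ m a} : FBetaRoot (.app (.lam σ m) a) (m.substTm 0 a)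
  | pi1 {m n} : FBetaRoot (.proj1 (.pair m n)) m
  | pi2 {m n} : FBetaRoot (.proj2 (.pair m n)) n
  | inl {σ τ δ a s t} : FBetaRoot (.case (.inl σ τ a) s t δ) (s.substTm 0 a)
  | inr {σ τ δ b s t} : FBetaRoot (.case (.inr σ τ b) s t δ) (t.substTm 0 b)
  | exelim {δ σ m p} :
      FBetaRoot (.exelim (.exintro m σ) p δ) ((p.substTy 0 σ).substTm 0 m)
  | tbeta {m σ} : FBetaRoot (.tapp (.tlam m) σ) (m.substTy 0 σ)

/-- The 21 root commutative (permutative) reductions of full system F. -/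
inductive FCommRoot : FTm → FTm → Prop
  -- pattern (W[x.S,y.T])E ⇝ W[x.SE,y.TE]
  | caseApp {w α β s t n} :
      FCommRoot (.app (.case w s t (.arr α β)) n)
        (.case w (.app s (n.shiftTm 0 1)) (.app t (n.shiftTm 0 1)) β)
  | casePi1 {w α β s t} :
      FCommRoot (.proj1 (.case w s t (.and α β))) (.case w (.proj1 s) (.proj1 t) α)
  | casePi2 {w α β s t} :
      FCommRoot (.proj2 (.case w s t (.and α β))) (.case w (.proj2 s) (.proj2 t) β)
  | caseCase {w α β δ s t a b} :
      FCommRoot (.case (.case w s t (.or α β)) a b δ)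
        (.case w (.case s (a.shiftTm 1 1) (b.shiftTm 1 1) δ)
          (.case t (a.shiftTm 1 1) (b.shiftTm 1 1) δ) δ)
  | caseEps {w s t α} :
      FCommRoot (.eps (.case w s t .bot) α) (.case w (.eps s α) (.eps t α) α)
  | caseTapp {w α s t γ} :
      FCommRoot (.tapp (.case w s t (.all α)) γ)
        (.case w (.tapp s γ) (.tapp t γ) (α.subst 0 γ))
  | caseExelim {w α s t p ξ} :
      FCommRoot (.exelim (.case w s t (.ex α)) p ξ)
        (.case w (.exelim s (p.shiftTm 1 1) ξ) (.exelim t (p.shiftTm 1 1) ξ) ξ)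
  -- pattern (A ε)E ⇝ A ε
  | epsApp {a σ τ n} : FCommRoot (.app (.eps a (.arr σ τ)) n) (.eps a τ)
  | epsPi1 {a σ τ} : FCommRoot (.proj1 (.eps a (.and σ τ))) (.eps a σ)
  | epsPi2 {a σ τ} : FCommRoot (.proj2 (.eps a (.and σ τ))) (.eps a τ)
  | epsCase {a σ τ δ s t} : FCommRoot (.case (.eps a (.or σ τ)) s t δ) (.eps a δ)
  | epsEps {a σ} : FCommRoot (.eps (.eps a .bot) σ) (.eps a σ)
  | epsTapp {a α γ} : FCommRoot (.tapp (.eps a (.all α)) γ) (.eps a (α.subst 0 γ))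
  | epsExelim {a α p ξ} : FCommRoot (.exelim (.eps a (.ex α)) p ξ) (.eps a ξ)
  -- pattern (M[x.P])E ⇝ M[x.PE]
  | exelimApp {m p α β n} :
      FCommRoot (.app (.exelim m p (.arr α β)) n)
        (.exelim m (.app p ((n.shiftTm 0 1).shiftTy 0 1)) β)
  | exelimPi1 {m p α β} :
      FCommRoot (.proj1 (.exelim m p (.and α β))) (.exelim m (.proj1 p) α)
  | exelimPi2 {m p α β} :
      FCommRoot (.proj2 (.exelim m p (.and α β))) (.exelim m (.proj2 p) β)
  | exelimCase {m p α β a b ξ} :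
      FCommRoot (.case (.exelim m p (.or α β)) a b ξ)
        (.exelim m (.case p ((a.shiftTm 1 1).shiftTy 0 1) ((b.shiftTm 1 1).shiftTy 0 1)
          (ξ.shift 0 1)) ξ)
  | exelimEps {m p σ} :
      FCommRoot (.eps (.exelim m p .bot) σ) (.exelim m (.eps p (σ.shift 0 1)) σ)
  | exelimTapp {m p α γ} :
      FCommRoot (.tapp (.exelim m p (.all α)) γ)
        (.exelim m (.tapp p (γ.shift 0 1)) (α.subst 0 γ))
  | exelimExelim {m p α n ξ} :
      FCommRoot (.exelim (.exelim m p (.ex α)) n ξ)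
        (.exelim m (.exelim p ((n.shiftTm 1 1).shiftTy 1 1) (ξ.shift 0 1)) ξ)

/-- One β-reduction step anywhere in a term of full system F. -/
def FBeta : FTm → FTm → Prop := CompatF FBetaRoot

/-- One commutative (permutative) reduction step anywhere in a term of full system F. -/
def FComm : FTm → FTm → Prop := CompatF FCommRoot

/-- The measure χ on terms of full system F. -/
def chi : FTm → ℕ
  | .var _ => 1
  | .lam _ t => chi t
  | .app s t => chi s ^ 2 * chi t
  | .pair s t => chi s + chi t
  | .inl _ _ t => chi t
  | .inr _ _ t => chi t
  | .proj1 t => chi t ^ 2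
  | .proj2 t => chi t ^ 2
  | .case w s t _ => chi w ^ 2 * (chi s + chi t) + 1
  | .eps t _ => chi t ^ 2 + 1
  | .tlam t => chi t
  | .tapp t _ => chi t ^ 2
  | .exintro t _ => chi t
  | .exelim m p _ => chi m ^ 2 * chi p + 1

/-! ## The target calculus: system F with → and ∀ only -/

/-- (Curry-style) terms of the target system F (→, ∀). -/
inductive FTm1 : Type
  | var  : ℕ → FTm1
  | lam  : FTm1 → FTm1
  | app  : FTm1 → FTm1 → FTm1
  | tlam : FTm1 → FTm1
  | tapp : FTm1 → FTy → FTm1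
  deriving DecidableEq

namespace FTm1

/-- Shift free term variables `≥ c` by `d`. -/
def shiftTm (c d : ℕ) : FTm1 → FTm1
  | var n => if n < c then var n else var (n + d)
  | lam t => lam (shiftTm (c + 1) d t)
  | app s t => app (shiftTm c d s) (shiftTm c d t)
  | tlam t => tlam (shiftTm c d t)
  | tapp t σ => tapp (shiftTm c d t) σ

/-- Shift free type variables `≥ c` by `d`. -/
def shiftTy (c d : ℕ) : FTm1 → FTm1
  | var n => var n
  | lam t => lam (shiftTy c d t)
  | app s t => app (shiftTy c d s) (shiftTy c d t)
  | tlam t => tlam (shiftTy (c + 1) d t)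
  | tapp t σ => tapp (shiftTy c d t) (σ.shift c d)

/-- Substitute a term for term variable `n`. -/
def substTm : FTm1 → ℕ → FTm1 → FTm1
  | var m, n, s => if m = n then s else if n < m then var (m - 1) else var m
  | lam t, n, s => lam (substTm t (n + 1) (shiftTm 0 1 s))
  | app a b, n, s => app (substTm a n s) (substTm b n s)
  | tlam t, n, s => tlam (substTm t n (shiftTy 0 1 s))
  | tapp t σ, n, s => tapp (substTm t n s) σ

/-- Substitute a type for type variable `n`. -/
def substTy : FTm1 → ℕ → FTy → FTm1
  | var m, _, _ => var m
  | lam t, n, ρ => lam (substTy t n ρ)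
  | app a b, n, ρ => app (substTy a n ρ) (substTy b n ρ)
  | tlam t, n, ρ => tlam (substTy t (n + 1) (ρ.shift 0 1))
  | tapp t σ, n, ρ => tapp (substTy t n ρ) (σ.subst n ρ)

end FTm1

/-- Typing in the target system F (→, ∀ fragment). -/
inductive HasTyT : List FTy → FTm1 → FTy → Prop
  | var {Γ n τ} : Γ[n]? = some τ → HasTyT Γ (.var n) τ
  | lam {Γ σ τ t} : HasTyT (σ :: Γ) t τ → HasTyT Γ (.lam t) (.arr σ τ)
  | app {Γ σ τ s t} : HasTyT Γ s (.arr σ τ) → HasTyT Γ t σ → HasTyT Γ (.app s t) τ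
  | tlam {Γ τ t} : HasTyT (Γ.map (FTy.shift 0 1)) t τ → HasTyT Γ (.tlam t) (.all τ)
  | tapp {Γ τ σ t} : HasTyT Γ t (.all τ) → HasTyT Γ (.tapp t σ) (τ.subst 0 σ)

/-- One β-reduction step (term or type β) in the target system F. -/
inductive TStep : FTm1 → FTm1 → Prop
  | beta {t s} : TStep (.app (.lam t) s) (t.substTm 0 s)
  | tbeta {t σ} : TStep (.tapp (.tlam t) σ) (t.substTy 0 σ)
  | lam {a b} : TStep a b → TStep (.lam a) (.lam b)
  | appL {a b t} : TStep a b → TStep (.app a t) (.app b t)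
  | appR {a b t} : TStep a b → TStep (.app t a) (.app t b)
  | tlam {a b} : TStep a b → TStep (.tlam a) (.tlam b)
  | tapp {σ a b} : TStep a b → TStep (.tapp a σ) (.tapp b σ)

/-! ## The CPS translation -/

/-- The helper translation `M ⋄ K` of the call-by-name CPS translation.
The eliminator continuations `E @ K` are inlined (see `atK` below). -/
def dia : FTm → FTm1 → FTm1
  | .var n, K => .app (.var n) K
  | .lam _ t, K => .app K (.lam (.lam (dia (t.shiftTm 0 1) (.var 0))))
  | .app s t, K =>
      dia s (.lam (.app (.app (.var 0) (.lam (dia (t.shiftTm 0 2) (.var 0))))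
        (K.shiftTm 0 1)))
  | .pair s t, K =>
      .app K (.lam (.app (.app (.var 0) (.lam (dia (s.shiftTm 0 2) (.var 0))))
        (.lam (dia (t.shiftTm 0 2) (.var 0)))))
  | .inl _ _ t, K => .app K (.lam (.lam (.app (.var 1) (.lam (dia (t.shiftTm 0 3) (.var 0))))))
  | .inr _ _ t, K => .app K (.lam (.lam (.app (.var 0) (.lam (dia (t.shiftTm 0 3) (.var 0))))))
  | .proj1 t, K => dia t (.lam (.app (.var 0) (.lam (.lam (.app (.var 1) (K.shiftTm 0 3))))))
  | .proj2 t, K => dia t (.lam (.app (.var 0) (.lam (.lam (.app (.var 0) (K.shiftTm 0 3))))))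
  | .case w s t _, K =>
      dia w (.lam (.app (.app (.var 0) (.lam (dia (s.shiftTm 1 1) (K.shiftTm 0 2))))
        (.lam (dia (t.shiftTm 1 1) (K.shiftTm 0 2)))))
  | .eps t _, _ => dia t (.lam (.var 0))
  | .tlam t, K => .app K (.tlam (.lam (dia (t.shiftTm 0 1) (.var 0))))
  | .tapp t σ, K => dia t (.lam (.app (.tapp (.var 0) (bar σ)) (K.shiftTm 0 1)))
  | .exintro t σ, K =>
      .app K (.lam (.app (.tapp (.var 0) (bar σ)) (.lam (dia (t.shiftTm 0 2) (.var 0)))))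
  | .exelim m p _, K =>
      dia m (.lam (.app (.var 0)
        (.tlam (.lam (dia (p.shiftTm 1 1) ((K.shiftTy 0 1).shiftTm 0 2))))))
  termination_by t _ => t.size
  decreasing_by all_goals simp [FTm.size] <;> omega

/-- The CPS translation of a term: `M̄ = λk.(M ⋄ k)`. -/
def cps (t : FTm) : FTm1 := .lam (dia (t.shiftTm 0 1) (.var 0))

/-- Eliminators of full system F, as standalone syntax. -/
inductive Elim : Type
  | arg   : FTm → Elim                    -- · R
  | pi1   : Elim
  | pi2   : Elim
  | cases : FTm → FTm → Elim              -- · [x.S, y.T]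
  | tyArg : FTy → Elim                    -- · σ
  | exE   : FTm → Elim                    -- · [x.S]
  | epsE  : Elim                          -- · ε

/-- The helper translation `E @ K` on eliminators. -/
def atK : Elim → FTm1 → FTm1
  | .arg n, K =>
      .lam (.app (.app (.var 0) (.lam (dia (n.shiftTm 0 2) (.var 0)))) (K.shiftTm 0 1))
  | .pi1, K => .lam (.app (.var 0) (.lam (.lam (.app (.var 1) (K.shiftTm 0 3)))))
  | .pi2, K => .lam (.app (.var 0) (.lam (.lam (.app (.var 0) (K.shiftTm 0 3)))))
  | .cases s t, K =>
      .lam (.app (.app (.var 0) (.lam (dia (s.shiftTm 1 1) (K.shiftTm 0 2))))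
        (.lam (dia (t.shiftTm 1 1) (K.shiftTm 0 2))))
  | .tyArg σ, K => .lam (.app (.tapp (.var 0) (bar σ)) (K.shiftTm 0 1))
  | .exE p, K =>
      .lam (.app (.var 0) (.tlam (.lam (dia (p.shiftTm 1 1) ((K.shiftTy 0 1).shiftTm 0 2)))))
  | .epsE, _ => .lam (.var 0)

/-- Term substitution on eliminators. -/
def esubstTm : Elim → ℕ → FTm → Elim
  | .arg m, n, s => .arg (m.substTm n s)
  | .pi1, _, _ => .pi1
  | .pi2, _, _ => .pi2
  | .cases a b, n, s =>
      .cases (a.substTm (n + 1) (s.shiftTm 0 1)) (b.substTm (n + 1) (s.shiftTm 0 1))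
  | .tyArg σ, _, _ => .tyArg σ
  | .exE p, n, s => .exE (p.substTm (n + 1) ((s.shiftTm 0 1).shiftTy 0 1))
  | .epsE, _, _ => .epsE

/-- Type substitution on eliminators. -/
def esubstTy : Elim → ℕ → FTy → Elim
  | .arg m, n, ρ => .arg (m.substTy n ρ)
  | .pi1, _, _ => .pi1
  | .pi2, _, _ => .pi2
  | .cases a b, n, ρ => .cases (a.substTy n ρ) (b.substTy n ρ)
  | .tyArg σ, n, ρ => .tyArg (σ.subst n ρ)
  | .exE p, n, ρ => .exE (p.substTy (n + 1) (ρ.shift 0 1))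
  | .epsE, _, _ => .epsE


theorem chi_pos (t : FTm) : 1 ≤ chi t := by
  induction t <;> simp_all [chi] <;> nlinarith

theorem chi_shiftTm (c d : ℕ) (t : FTm) : chi (t.shiftTm c d) = chi t := by
  induction t generalizing c with
  | var n => simp only [FTm.shiftTm]; split <;> rfl
  | _ => simp_all [FTm.shiftTm, chi]

theorem chi_shiftTy (c d : ℕ) (t : FTm) : chi (t.shiftTy c d) = chi t := by
  induction t generalizing c with
  | var n => rfl
  | _ => simp_all [FTm.shiftTy, chi]

theorem case_master {W s t c : ℕ} (hW : 1 ≤ W) (hs : 1 ≤ s) (ht : 1 ≤ t) (hc : 1 ≤ c) :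
    W * (s ^ 2 * c + t ^ 2 * c) + 2 * W < (W * (s + t) + 1) ^ 2 * c := by
  have hst : s ^ 2 + t ^ 2 ≤ (s + t) ^ 2 := by nlinarith
  have h1 : W * (s ^ 2 * c + t ^ 2 * c) ≤ W * W * ((s + t) ^ 2 * c) := by
    calc W * (s ^ 2 * c + t ^ 2 * c) = W * ((s ^ 2 + t ^ 2) * c) := by ring
      _ ≤ W * ((s + t) ^ 2 * c) := Nat.mul_le_mul_left W (Nat.mul_le_mul_right c hst)
      _ ≤ W * W * ((s + t) ^ 2 * c) := Nat.mul_le_mul_right _ (Nat.le_mul_of_pos_right W hW)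
  have h2 : 4 * W ≤ 2 * W * ((s + t) * c) := by
    have hstc : 2 ≤ (s + t) * c := by
      calc 2 = 2 * 1 := rfl
        _ ≤ (s + t) * c := Nat.mul_le_mul (by omega) hc
    calc 4 * W = 2 * W * 2 := by ring
      _ ≤ 2 * W * ((s + t) * c) := Nat.mul_le_mul_left _ hstc
  nlinarith [h1, h2, hc, hW]

theorem eps_master {x c : ℕ} (hx : 2 ≤ x) (hc : 1 ≤ c) : x < x ^ 2 * c := by
  calc x < x * x := by nlinarith
    _ = x ^ 2 * 1 := by ring
    _ ≤ x ^ 2 * c := Nat.mul_le_mul_left _ hc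

theorem ex_master {W p c : ℕ} (hW : 1 ≤ W) (hp : 1 ≤ p) (hc : 1 ≤ c) :
    W * (p ^ 2 * c) + 2 * W ≤ (W * p + 1) ^ 2 * c := by
  have h1 : W * (p ^ 2 * c) ≤ W * W * (p ^ 2 * c) :=
    Nat.mul_le_mul_right _ (Nat.le_mul_of_pos_right W hW)
  have h2 : 2 * W ≤ 2 * W * (p * c) := by
    have hpc : 1 ≤ p * c := Nat.one_le_iff_ne_zero.mpr (by positivity)
    calc 2 * W = 2 * W * 1 := by ring
      _ ≤ 2 * W * (p * c) := Nat.mul_le_mul_left _ hpc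
  nlinarith [h1, h2, hc]

theorem chi_root_lt {a b : FTm} (h : FCommRoot a b) : chi b < chi a := by
  cases h with
  | @caseApp w α β s t n =>
      simp only [chi, chi_shiftTm]
      have h := case_master (Nat.one_le_pow 2 _ (chi_pos w)) (chi_pos s) (chi_pos t) (chi_pos n)
      have hW := Nat.one_le_pow 2 (chi w) (chi_pos w)
      nlinarith [h, hW]
  | @casePi1 w α β s t =>
      simp only [chi]
      have h := case_master (Nat.one_le_pow 2 _ (chi_pos w)) (chi_pos s) (chi_pos t) (le_refl 1)
      have hW := Nat.one_le_pow 2 (chi w) (chi_pos w)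
      nlinarith [h, hW]
  | @casePi2 w α β s t =>
      simp only [chi]
      have h := case_master (Nat.one_le_pow 2 _ (chi_pos w)) (chi_pos s) (chi_pos t) (le_refl 1)
      have hW := Nat.one_le_pow 2 (chi w) (chi_pos w)
      nlinarith [h, hW]
  | @caseCase w α β δ s t a b =>
      simp only [chi, chi_shiftTm]
      have hc : 1 ≤ chi a + chi b := by have := chi_pos a; omega
      have h := case_master (Nat.one_le_pow 2 _ (chi_pos w)) (chi_pos s) (chi_pos t) hc
      have hW := Nat.one_le_pow 2 (chi w) (chi_pos w)
      nlinarith [h, hW]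
  | @caseEps w s t α =>
      simp only [chi]
      have h := case_master (Nat.one_le_pow 2 _ (chi_pos w)) (chi_pos s) (chi_pos t) (le_refl 1)
      have hW := Nat.one_le_pow 2 (chi w) (chi_pos w)
      nlinarith [h, hW]
  | @caseTapp w α s t γ =>
      simp only [chi]
      have h := case_master (Nat.one_le_pow 2 _ (chi_pos w)) (chi_pos s) (chi_pos t) (le_refl 1)
      have hW := Nat.one_le_pow 2 (chi w) (chi_pos w)
      nlinarith [h, hW]
  | @caseExelim w α s t p ξ =>
      simp only [chi, chi_shiftTm]
      have h := case_master (Nat.one_le_pow 2 _ (chi_pos w)) (chi_pos s) (chi_pos t) (chi_pos p)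
      have hW := Nat.one_le_pow 2 (chi w) (chi_pos w)
      nlinarith [h, hW]
  | @epsApp a σ τ n =>
      simp only [chi]
      have hx : 2 ≤ chi a ^ 2 + 1 := by have := Nat.one_le_pow 2 (chi a) (chi_pos a); omega
      have h := eps_master hx (chi_pos n)
      nlinarith [h]
  | @epsPi1 a σ τ =>
      simp only [chi]
      have hx : 2 ≤ chi a ^ 2 + 1 := by have := Nat.one_le_pow 2 (chi a) (chi_pos a); omega
      nlinarith [eps_master hx (le_refl 1)]
  | @epsPi2 a σ τ =>
      simp only [chi]
      have hx : 2 ≤ chi a ^ 2 + 1 := by have := Nat.one_le_pow 2 (chi a) (chi_pos a); omega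
      nlinarith [eps_master hx (le_refl 1)]
  | @epsCase a σ τ δ s t =>
      simp only [chi]
      have hx : 2 ≤ chi a ^ 2 + 1 := by have := Nat.one_le_pow 2 (chi a) (chi_pos a); omega
      have hc : 1 ≤ chi s + chi t := by have := chi_pos s; omega
      nlinarith [eps_master hx hc]
  | @epsEps a σ =>
      simp only [chi]
      have hx : 2 ≤ chi a ^ 2 + 1 := by have := Nat.one_le_pow 2 (chi a) (chi_pos a); omega
      nlinarith [eps_master hx (le_refl 1)]
  | @epsTapp a α γ =>
      simp only [chi]
      have hx : 2 ≤ chi a ^ 2 + 1 := by have := Nat.one_le_pow 2 (chi a) (chi_pos a); omega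
      nlinarith [eps_master hx (le_refl 1)]
  | @epsExelim a α p ξ =>
      simp only [chi]
      have hx : 2 ≤ chi a ^ 2 + 1 := by have := Nat.one_le_pow 2 (chi a) (chi_pos a); omega
      nlinarith [eps_master hx (chi_pos p)]
  | @exelimApp m p α β n =>
      simp only [chi, chi_shiftTm, chi_shiftTy]
      have h := ex_master (Nat.one_le_pow 2 _ (chi_pos m)) (chi_pos p) (chi_pos n)
      have hW := Nat.one_le_pow 2 (chi m) (chi_pos m)
      nlinarith [h, hW]
  | @exelimPi1 m p α β =>
      simp only [chi]
      have h := ex_master (Nat.one_le_pow 2 _ (chi_pos m)) (chi_pos p) (le_refl 1)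
      have hW := Nat.one_le_pow 2 (chi m) (chi_pos m)
      nlinarith [h, hW]
  | @exelimPi2 m p α β =>
      simp only [chi]
      have h := ex_master (Nat.one_le_pow 2 _ (chi_pos m)) (chi_pos p) (le_refl 1)
      have hW := Nat.one_le_pow 2 (chi m) (chi_pos m)
      nlinarith [h, hW]
  | @exelimCase m p α β a b ξ =>
      simp only [chi, chi_shiftTm, chi_shiftTy]
      have hc : 1 ≤ chi a + chi b := by have := chi_pos a; omega
      have h := ex_master (Nat.one_le_pow 2 _ (chi_pos m)) (chi_pos p) hc
      have hW := Nat.one_le_pow 2 (chi m) (chi_pos m)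
      nlinarith [h, hW]
  | @exelimEps m p σ =>
      simp only [chi]
      have h := ex_master (Nat.one_le_pow 2 _ (chi_pos m)) (chi_pos p) (le_refl 1)
      have hW := Nat.one_le_pow 2 (chi m) (chi_pos m)
      nlinarith [h, hW]
  | @exelimTapp m p α γ =>
      simp only [chi]
      have h := ex_master (Nat.one_le_pow 2 _ (chi_pos m)) (chi_pos p) (le_refl 1)
      have hW := Nat.one_le_pow 2 (chi m) (chi_pos m)
      nlinarith [h, hW]
  | @exelimExelim m p α n ξ =>
      simp only [chi, chi_shiftTm, chi_shiftTy]
      have h := ex_master (Nat.one_le_pow 2 _ (chi_pos m)) (chi_pos p) (chi_pos n)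
      have hW := Nat.one_le_pow 2 (chi m) (chi_pos m)
      nlinarith [h, hW]

theorem chi_comm_lt {a b : FTm} (h : FComm a b) : chi b < chi a := by
  induction h with
  | root h => exact chi_root_lt h
  | lam _ ih => exact ih
  | appL _ ih =>
      rename_i a b t _
      simp only [chi]
      have h2 : chi b ^ 2 < chi a ^ 2 := Nat.pow_lt_pow_left ih (by norm_num)
      have ht : 0 < chi t := chi_pos t
      exact mul_lt_mul_of_pos_right h2 ht
  | appR _ ih =>
      rename_i a b t _
      simp only [chi]
      have ht : 0 < chi t ^ 2 := by have := chi_pos t; positivity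
      exact mul_lt_mul_of_pos_left ih ht
  | pairL _ ih => simp only [chi]; omega
  | pairR _ ih => simp only [chi]; omega
  | inl _ ih => exact ih
  | inr _ ih => exact ih
  | proj1 _ ih => exact Nat.pow_lt_pow_left ih (by norm_num)
  | proj2 _ ih => exact Nat.pow_lt_pow_left ih (by norm_num)
  | caseW _ ih =>
      rename_i δ a b s t _
      simp only [chi]
      have h2 : chi b ^ 2 < chi a ^ 2 := Nat.pow_lt_pow_left ih (by norm_num)
      have hst : 0 < chi s + chi t := by have := chi_pos s; omega
      have := mul_lt_mul_of_pos_right h2 hst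
      omega
  | caseS _ ih =>
      rename_i δ w a b t _
      simp only [chi]
      have hw : 0 < chi w ^ 2 := by have := chi_pos w; positivity
      have := mul_lt_mul_of_pos_left (show chi b + chi t < chi a + chi t by omega) hw
      omega
  | caseT _ ih =>
      rename_i δ w s a b _
      simp only [chi]
      have hw : 0 < chi w ^ 2 := by have := chi_pos w; positivity
      have := mul_lt_mul_of_pos_left (show chi s + chi b < chi s + chi a by omega) hw
      omega
  | eps _ ih =>
      simp only [chi]
      have := Nat.pow_lt_pow_left ih (show 2 ≠ 0 by norm_num)
      omega
  | tlam _ ih => exact ih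
  | tapp _ ih => exact Nat.pow_lt_pow_left ih (by norm_num)
  | exintro _ ih => exact ih
  | exelimM _ ih =>
      rename_i δ a b p _
      simp only [chi]
      have h2 : chi b ^ 2 < chi a ^ 2 := Nat.pow_lt_pow_left ih (by norm_num)
      have hp : 0 < chi p := chi_pos p
      have := mul_lt_mul_of_pos_right h2 hp
      omega
  | exelimP _ ih =>
      rename_i δ m a b _
      simp only [chi]
      have hm : 0 < chi m ^ 2 := by have := chi_pos m; positivity
      have := mul_lt_mul_of_pos_left ih hm
      omega

/-- Every sequence of commutative (permutative) reductions in full system F terminates. -/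
theorem comm_terminating :
    ¬ ∃ f : ℕ → FTm, ∀ n, FComm (f n) (f (n + 1)) := by
  rintro ⟨f, hf⟩
  have hdec : ∀ n, chi (f (n + 1)) < chi (f n) := fun n => chi_comm_lt (hf n)
  have hb : ∀ n, chi (f n) + n ≤ chi (f 0) := by
    intro n
    induction n with
    | zero => omega
    | succ k ih => have := hdec k; omega
  have := hb (chi (f 0) + 1)
  have := chi_pos (f (chi (f 0) + 1))
  omega
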